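/- Consider the right action of the Fomin–Kirillov generators on the free ℚ-vector space ℚ[Sₙ] defined by w ⊙ d_{i,j} = w·t_{i,j} if w·t_{i,j} ⋖ w in Bruhat order (i.e., ℓ(w·t_{i,j}) = ℓ(w) − 1) and w ⊙ d_{i,j} = 0 otherwise, extended linearly; similarly let w ⊙ u_i = w·t_{i,i+1} if w(i) < w(i+1) and 0 otherwise. Then for all 1 ≤ i < i+1 < j ≤ n and all w ∈ Sₙ: (w ⊙ d_{i,j}) ⊙ u_i = (w ⊙ u_i) ⊙ d_{i+1,j} and (w ⊙ d_{i+1,j}) ⊙ u_i = (w ⊙ u_i) ⊙ d_{i,j}. -/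

import Mathlib

open Finset


/-- Number of inversions of a permutation of `Fin n`. -/
def invCount {n : ℕ} (w : Equiv.Perm (Fin n)) : ℕ :=
  (Finset.univ.filter (fun p : Fin n × Fin n => p.1 < p.2 ∧ w p.2 < w p.1)).card

/-- `w ∈ Sₙ^{k↘}` (1-indexed: `w(k+1) > ⋯ > w(n)`); positions are 0-indexed here. -/
def DescFrom (n k : ℕ) (w : Equiv.Perm (Fin n)) : Prop :=
  ∀ p q : Fin n, k ≤ (p : ℕ) → p < q → w q < w p

/-- `u ⋖ₖ w` : cover in the `k`-Bruhat order (1-indexed `k`; positions 0-indexed,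
so `i ≤ k < j` becomes `↑i < k ≤ ↑j`). -/
def kCover (n k : ℕ) (u w : Equiv.Perm (Fin n)) : Prop :=
  ∃ i j : Fin n, (i : ℕ) < k ∧ k ≤ (j : ℕ) ∧ u = w * Equiv.swap i j ∧
    invCount w = invCount u + 1

/-- An increasing `k`-chain `v 0 ⋖ₖ v 1 ⋖ₖ ⋯ ⋖ₖ v d`, with
`v m = v (m+1) * swap (a m) (b m)` and strictly increasing smaller swapped values
`v m (a m)`. -/
def IsIncKChain (n k : ℕ) {d : ℕ} (v : Fin (d + 1) → Equiv.Perm (Fin n))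
    (a b : Fin d → Fin n) : Prop :=
  (∀ m : Fin d, (a m : ℕ) < k ∧ k ≤ (b m : ℕ) ∧
      v m.castSucc = v m.succ * Equiv.swap (a m) (b m) ∧
      invCount (v m.succ) = invCount (v m.castSucc) + 1) ∧
  ∀ m m' : Fin d, m < m' → v m.castSucc (a m) < v m'.castSucc (a m')

/-- There is an increasing `k`-chain of length `d` (number of covers) from `u` to `w`. -/
def ExIncKChainLen (n k d : ℕ) (u w : Equiv.Perm (Fin n)) : Prop :=
  ∃ (v : Fin (d + 1) → Equiv.Perm (Fin n)) (a b : Fin d → Fin n),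
    IsIncKChain n k v a b ∧ v 0 = u ∧ v (Fin.last d) = w

/-- The free `ℚ`-vector space on `Sₙ`. -/
abbrev PermMod (n : ℕ) := Equiv.Perm (Fin n) →₀ ℚ

/-- The operator `⊙ d_{a,b}` on `ℚ[Sₙ]`: sends `w` to `w * t_{a,b}` if the
length drops by exactly one, and to `0` otherwise; extended linearly. -/
noncomputable def dOp (n : ℕ) (a b : Fin n) : PermMod n →ₗ[ℚ] PermMod n :=
  Finsupp.lsum ℚ fun w =>
    LinearMap.toSpanSingleton ℚ (PermMod n)
      (if invCount w = invCount (w * Equiv.swap a b) + 1 then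
        Finsupp.single (w * Equiv.swap a b) 1 else 0)

/-- The operator `⊙ u_i` on `ℚ[Sₙ]` (with `b` intended to be `a + 1`):
sends `w` to `w * t_{a,b}` if `w a < w b`, and to `0` otherwise. -/
noncomputable def uOp (n : ℕ) (a b : Fin n) : PermMod n →ₗ[ℚ] PermMod n :=
  Finsupp.lsum ℚ fun w =>
    LinearMap.toSpanSingleton ℚ (PermMod n)
      (if w a < w b then Finsupp.single (w * Equiv.swap a b) 1 else 0)

lemma invCount_mul (n : ℕ) (w σ : Equiv.Perm (Fin n)) :
    invCount (w * σ) =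
      (univ.filter (fun x : Fin n × Fin n => σ⁻¹ x.1 < σ⁻¹ x.2 ∧ w x.2 < w x.1)).card := by
  unfold invCount
  apply Finset.card_nbij' (fun x => (σ x.1, σ x.2)) (fun x => (σ⁻¹ x.1, σ⁻¹ x.2))
  · intro x hx
    simp only [Finset.mem_coe, mem_filter, mem_univ, true_and] at hx ⊢
    simpa using hx
  · intro x hx
    simp only [Finset.mem_coe, mem_filter, mem_univ, true_and, Equiv.Perm.mul_apply] at hx ⊢
    exact Finset.mem_filter.mpr ⟨Finset.mem_univ _, by simpa using hx⟩
  · intro x _; simp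
  · intro x _; simp

section
variable {n : ℕ} (w : Equiv.Perm (Fin n)) (p q : Fin n)



lemma pointwise (hpq : p < q) (x y : Fin n) :
    ((if x < y ∧ w y < w x then (1:ℤ) else 0) -
      (if Equiv.swap p q x < Equiv.swap p q y ∧ w y < w x then 1 else 0)) =
    (if x = p then (if y = q then (if w q < w p then (1:ℤ) else 0) else 0) else 0)
    + (if x = q then (if y = p then -(if w p < w q then (1:ℤ) else 0) else 0) else 0)
    + (if x = p then (if p < y ∧ y < q then (if w y < w p then (1:ℤ) else 0) else 0) else 0)
    + (if y = p then (if p < x ∧ x < q then -(if w p < w x then (1:ℤ) else 0) else 0) else 0)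
    + (if x = q then (if p < y ∧ y < q then -(if w y < w q then (1:ℤ) else 0) else 0) else 0)
    + (if y = q then (if p < x ∧ x < q then (if w q < w x then (1:ℤ) else 0) else 0) else 0) := by
  have hne : p ≠ q := ne_of_lt hpq
  have hqp : q ≠ p := hne.symm
  have hpq' : (p:ℕ) < q := hpq
  rcases eq_or_ne x p with h1 | h1
  · rcases eq_or_ne y p with h3 | h3
    · rw [h1, h3]
      simp [hne, hqp, lt_irrefl]
    · rcases eq_or_ne y q with h4 | h4
      · rw [h1, h4]
        simp [hne, hqp, hpq, lt_irrefl, Equiv.swap_apply_left, Equiv.swap_apply_right,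
          not_lt.mpr (le_of_lt hpq)]
      · rw [h1]
        have h3' : (y:ℕ) ≠ p := by simpa [Fin.ext_iff] using h3
        have h4' : (y:ℕ) ≠ q := by simpa [Fin.ext_iff] using h4
        simp only [Equiv.swap_apply_left, Equiv.swap_apply_of_ne_of_ne h3 h4,
          if_pos rfl, if_neg h3, if_neg h4, if_neg hne, if_neg hqp]
        simp only [Fin.lt_def]
        split_ifs <;> omega
  · rcases eq_or_ne x q with h2 | h2
    · rcases eq_or_ne y p with h3 | h3
      · rw [h2, h3]
        simp [hne, hqp, hpq, lt_irrefl, Equiv.swap_apply_left, Equiv.swap_apply_right,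
          not_lt.mpr (le_of_lt hpq)]
      · rcases eq_or_ne y q with h4 | h4
        · rw [h2, h4]
          simp [hne, hqp, lt_irrefl]
        · rw [h2]
          have h3' : (y:ℕ) ≠ p := by simpa [Fin.ext_iff] using h3
          have h4' : (y:ℕ) ≠ q := by simpa [Fin.ext_iff] using h4
          simp only [Equiv.swap_apply_right, Equiv.swap_apply_of_ne_of_ne h3 h4,
            if_pos rfl, if_neg h3, if_neg h4, if_neg hne, if_neg hqp]
          simp only [Fin.lt_def]
          split_ifs <;> omega
    · rcases eq_or_ne y p with h3 | h3
      · rw [h3]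
        have h1' : (x:ℕ) ≠ p := fun hh => h1 (Fin.ext hh)
        have h2' : (x:ℕ) ≠ q := fun hh => h2 (Fin.ext hh)
        simp only [Equiv.swap_apply_left, Equiv.swap_apply_of_ne_of_ne h1 h2,
          if_pos rfl, if_neg h1, if_neg h2, if_neg hne, if_neg hqp]
        simp only [Fin.lt_def]
        split_ifs <;> omega
      · rcases eq_or_ne y q with h4 | h4
        · rw [h4]
          have h1' : (x:ℕ) ≠ p := fun hh => h1 (Fin.ext hh)
          have h2' : (x:ℕ) ≠ q := fun hh => h2 (Fin.ext hh)
          simp only [Equiv.swap_apply_right, Equiv.swap_apply_of_ne_of_ne h1 h2,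
            if_pos rfl, if_neg h1, if_neg h2, if_neg hne, if_neg hqp]
          simp only [Fin.lt_def]
          split_ifs <;> omega
        · simp only [Equiv.swap_apply_of_ne_of_ne h1 h2, Equiv.swap_apply_of_ne_of_ne h3 h4,
            if_neg h1, if_neg h2, if_neg h3, if_neg h4, sub_self]
          ring

lemma delta (hpq : p < q) :
    (invCount w : ℤ) - invCount (w * Equiv.swap p q) =
      ((if w q < w p then 1 else 0) - (if w p < w q then 1 else 0))
      + ∑ m : Fin n, (if p < m ∧ m < q then
          ((if w m < w p then (1:ℤ) else 0) - (if w p < w m then 1 else 0)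
            + ((if w q < w m then 1 else 0) - (if w m < w q then 1 else 0))) else 0) := by
  have h1 : (invCount w : ℤ) =
      ∑ x : Fin n × Fin n, (if x.1 < x.2 ∧ w x.2 < w x.1 then (1:ℤ) else 0) := by
    unfold invCount
    rw [Finset.card_filter]
    push_cast
    rfl
  have h2 : (invCount (w * Equiv.swap p q) : ℤ) =
      ∑ x : Fin n × Fin n,
        (if Equiv.swap p q x.1 < Equiv.swap p q x.2 ∧ w x.2 < w x.1 then (1:ℤ) else 0) := by
    rw [invCount_mul, Finset.card_filter]
    push_cast
    simp [Equiv.swap_inv]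
    rw [Finset.card_filter]; push_cast; rfl
  rw [h1, h2, ← Finset.sum_sub_distrib]
  rw [Fintype.sum_prod_type]
  have key : ∀ x : Fin n, ∀ y : Fin n,
      ((if x < y ∧ w y < w x then (1:ℤ) else 0) -
        (if Equiv.swap p q x < Equiv.swap p q y ∧ w y < w x then 1 else 0)) =
      (if x = p then (if y = q then (if w q < w p then (1:ℤ) else 0) else 0) else 0)
      + (if x = q then (if y = p then -(if w p < w q then (1:ℤ) else 0) else 0) else 0)
      + (if x = p then (if p < y ∧ y < q then (if w y < w p then (1:ℤ) else 0) else 0) else 0)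
      + (if y = p then (if p < x ∧ x < q then -(if w p < w x then (1:ℤ) else 0) else 0) else 0)
      + (if x = q then (if p < y ∧ y < q then -(if w y < w q then (1:ℤ) else 0) else 0) else 0)
      + (if y = q then (if p < x ∧ x < q then (if w q < w x then (1:ℤ) else 0) else 0) else 0) :=
    pointwise w p q hpq
  rw [Finset.sum_congr rfl fun x _ => Finset.sum_congr rfl fun y _ => key x y]
  have sum_if_const : ∀ (c : Prop) [Decidable c] (h : Fin n → ℤ),
      ∑ y : Fin n, (if c then h y else 0) = if c then ∑ y : Fin n, h y else 0 := by
    intro c _ h; split <;> simp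
  simp only [Finset.sum_add_distrib, sum_if_const, Fintype.sum_ite_eq']
  have rhs_split : ∀ m : Fin n, (if p < m ∧ m < q then
          ((if w m < w p then (1:ℤ) else 0) - (if w p < w m then 1 else 0)
            + ((if w q < w m then 1 else 0) - (if w m < w q then 1 else 0))) else 0)
      = (if p < m ∧ m < q then (if w m < w p then (1:ℤ) else 0) else 0)
        + (if p < m ∧ m < q then -(if w p < w m then (1:ℤ) else 0) else 0)
        + (if p < m ∧ m < q then -(if w m < w q then (1:ℤ) else 0) else 0)
        + (if p < m ∧ m < q then (if w q < w m then (1:ℤ) else 0) else 0) := by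
    intro m; split <;> ring
  rw [Finset.sum_congr rfl fun m _ => rhs_split m]
  simp only [Finset.sum_add_distrib]
  ring

lemma cover_iff (hpq : p < q) :
    invCount w = invCount (w * Equiv.swap p q) + 1 ↔
      (w q < w p ∧ ∀ m : Fin n, p < m → m < q → ¬(w q < w m ∧ w m < w p)) := by
  have hD := delta w p q hpq
  by_cases hc : w q < w p
  · have hns : ¬ w p < w q := asymm hc
    rw [if_pos hc, if_neg hns] at hD
    have hpt : ∀ m : Fin n, (if p < m ∧ m < q then
          ((if w m < w p then (1:ℤ) else 0) - (if w p < w m then 1 else 0)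
            + ((if w q < w m then 1 else 0) - (if w m < w q then 1 else 0))) else 0)
        = 2 * (if p < m ∧ m < q ∧ w q < w m ∧ w m < w p then (1:ℤ) else 0) := by
      intro m
      by_cases hm : p < m ∧ m < q
      · have h1 : w m ≠ w p := fun h => (ne_of_gt hm.1) (w.injective h)
        have h2 : w m ≠ w q := fun h => (ne_of_lt hm.2) (w.injective h)
        have h1' : ((w m : ℕ)) ≠ ((w p : ℕ)) := fun hh => h1 (Fin.ext hh)
        have h2' : ((w m : ℕ)) ≠ ((w q : ℕ)) := fun hh => h2 (Fin.ext hh)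
        have hc' : ((w q : ℕ)) < ((w p : ℕ)) := hc
        rw [if_pos hm]
        simp only [hm.1, hm.2, true_and]
        simp only [Fin.lt_def]
        split_ifs <;> omega
      · have h2 : ¬(p < m ∧ m < q ∧ w q < w m ∧ w m < w p) :=
          fun h => hm ⟨h.1, h.2.1⟩
        rw [if_neg hm, if_neg h2]; ring
    rw [Finset.sum_congr rfl (fun m _ => hpt m), ← Finset.mul_sum] at hD
    have hT : ∑ m : Fin n, (if p < m ∧ m < q ∧ w q < w m ∧ w m < w p then (1:ℤ) else 0)
        = ((Finset.univ.filter
            (fun m : Fin n => p < m ∧ m < q ∧ w q < w m ∧ w m < w p)).card : ℤ) := by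
      rw [Finset.card_filter]; push_cast; rfl
    rw [hT] at hD
    constructor
    · intro h
      refine ⟨hc, fun m h1 h2 h3 => ?_⟩
      have hzero : (Finset.univ.filter
          (fun m : Fin n => p < m ∧ m < q ∧ w q < w m ∧ w m < w p)).card = 0 := by omega
      have : m ∈ Finset.univ.filter
          (fun m : Fin n => p < m ∧ m < q ∧ w q < w m ∧ w m < w p) := by
        simp [h1, h2, h3.1, h3.2]
      rw [Finset.card_eq_zero] at hzero
      simp [hzero] at this
    · rintro ⟨-, hall⟩
      have hzero : (Finset.univ.filter
          (fun m : Fin n => p < m ∧ m < q ∧ w q < w m ∧ w m < w p)).card = 0 := by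
        rw [Finset.card_eq_zero, Finset.filter_eq_empty_iff]
        exact fun m _ h => hall m h.1 h.2.1 ⟨h.2.2.1, h.2.2.2⟩
      omega
  · have hwpq : w p ≠ w q := fun h => (ne_of_lt hpq) (w.injective h)
    have hlt : w p < w q := lt_of_le_of_ne (not_lt.mp hc) hwpq
    rw [if_neg hc, if_pos hlt] at hD
    have hS : ∑ m : Fin n, (if p < m ∧ m < q then
          ((if w m < w p then (1:ℤ) else 0) - (if w p < w m then 1 else 0)
            + ((if w q < w m then 1 else 0) - (if w m < w q then 1 else 0))) else 0) ≤ 0 := by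
      apply Finset.sum_nonpos
      intro m _
      by_cases hm : p < m ∧ m < q
      · have h1 : w m ≠ w p := fun h => (ne_of_gt hm.1) (w.injective h)
        have h2 : w m ≠ w q := fun h => (ne_of_lt hm.2) (w.injective h)
        have h1' : ((w m : ℕ)) ≠ ((w p : ℕ)) := fun hh => h1 (Fin.ext hh)
        have h2' : ((w m : ℕ)) ≠ ((w q : ℕ)) := fun hh => h2 (Fin.ext hh)
        have hlt' : ((w p : ℕ)) < ((w q : ℕ)) := hlt
        rw [if_pos hm]
        simp only [Fin.lt_def]
        split_ifs <;> omega
      · rw [if_neg hm]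
    constructor
    · intro h; exfalso; omega
    · rintro ⟨h, -⟩; exact absurd h hc

end

lemma dOp_single (n : ℕ) (a b : Fin n) (v : Equiv.Perm (Fin n)) :
    dOp n a b (Finsupp.single v 1) =
      if invCount v = invCount (v * Equiv.swap a b) + 1 then
        Finsupp.single (v * Equiv.swap a b) (1:ℚ) else 0 := by
  rw [dOp, Finsupp.lsum_single, LinearMap.toSpanSingleton_apply, one_smul]

lemma uOp_single (n : ℕ) (a b : Fin n) (v : Equiv.Perm (Fin n)) :
    uOp n a b (Finsupp.single v 1) =
      if v a < v b then Finsupp.single (v * Equiv.swap a b) (1:ℚ) else 0 := by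
  rw [uOp, Finsupp.lsum_single, LinearMap.toSpanSingleton_apply, one_smul]

lemma swap_rel1 {n : ℕ} (i i' j : Fin n) (h1 : i ≠ i') (h2 : i ≠ j) (h3 : i' ≠ j) :
    Equiv.swap i j * Equiv.swap i i' = Equiv.swap i i' * Equiv.swap i' j := by
  ext x
  simp only [Equiv.Perm.mul_apply, Equiv.swap_apply_def]
  split_ifs <;> simp_all

lemma swap_rel2 {n : ℕ} (i i' j : Fin n) (h1 : i ≠ i') (h2 : i ≠ j) (h3 : i' ≠ j) :
    Equiv.swap i' j * Equiv.swap i i' = Equiv.swap i i' * Equiv.swap i j := by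
  ext x
  simp only [Equiv.Perm.mul_apply, Equiv.swap_apply_def]
  split_ifs <;> simp_all

lemma part1 (n : ℕ) (i i' j : Fin n) (h1 : (i':ℕ) = (i:ℕ)+1) (hij : (i:ℕ)+1 < (j:ℕ))
    (w : Equiv.Perm (Fin n)) :
    uOp n i i' (dOp n i j (Finsupp.single w 1)) =
      dOp n i' j (uOp n i i' (Finsupp.single w 1)) := by
  have hii' : i < i' := by rw [Fin.lt_def]; omega
  have hi'j : i' < j := by rw [Fin.lt_def]; omega
  have hij' : i < j := by rw [Fin.lt_def]; omega
  have eA : (w * Equiv.swap i j) i = w j := by simp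
  have eB : (w * Equiv.swap i j) i' = w i' := by
    rw [Equiv.Perm.mul_apply, Equiv.swap_apply_of_ne_of_ne hii'.ne' hi'j.ne]
  have eC : (w * Equiv.swap i i') i' = w i := by simp
  have eD : (w * Equiv.swap i i') j = w j := by
    rw [Equiv.Perm.mul_apply, Equiv.swap_apply_of_ne_of_ne hij'.ne' hi'j.ne']
  have eM : ∀ m : Fin n, i' < m → (w * Equiv.swap i i') m = w m := fun m hm => by
    rw [Equiv.Perm.mul_apply,
      Equiv.swap_apply_of_ne_of_ne (lt_trans hii' hm).ne' hm.ne']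
  have L : uOp n i i' (dOp n i j (Finsupp.single w 1)) =
      if invCount w = invCount (w * Equiv.swap i j) + 1 ∧ w j < w i' then
        Finsupp.single (w * Equiv.swap i j * Equiv.swap i i') (1:ℚ) else 0 := by
    rw [dOp_single]
    by_cases hC : invCount w = invCount (w * Equiv.swap i j) + 1
    · rw [if_pos hC, uOp_single, eA, eB]
      by_cases h2 : w j < w i'
      · rw [if_pos h2, if_pos ⟨hC, h2⟩]
      · rw [if_neg h2, if_neg (fun hh => h2 hh.2)]
    · rw [if_neg hC, map_zero, if_neg (fun hh => hC hh.1)]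
  have R : dOp n i' j (uOp n i i' (Finsupp.single w 1)) =
      if w i < w i' ∧ invCount (w * Equiv.swap i i') =
          invCount (w * Equiv.swap i i' * Equiv.swap i' j) + 1 then
        Finsupp.single (w * Equiv.swap i i' * Equiv.swap i' j) (1:ℚ) else 0 := by
    rw [uOp_single]
    by_cases hC : w i < w i'
    · rw [if_pos hC, dOp_single]
      by_cases h2 : invCount (w * Equiv.swap i i') =
          invCount (w * Equiv.swap i i' * Equiv.swap i' j) + 1
      · rw [if_pos h2, if_pos ⟨hC, h2⟩]
      · rw [if_neg h2, if_neg (fun hh => h2 hh.2)]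
    · rw [if_neg hC, map_zero, if_neg (fun hh => hC hh.1)]
  rw [L, R]
  have hperm : w * Equiv.swap i j * Equiv.swap i i' =
      w * Equiv.swap i i' * Equiv.swap i' j := by
    rw [mul_assoc, mul_assoc, swap_rel1 i i' j hii'.ne hij'.ne hi'j.ne]
  rw [hperm]
  have key : (invCount w = invCount (w * Equiv.swap i j) + 1 ∧ w j < w i') ↔
      (w i < w i' ∧ invCount (w * Equiv.swap i i') =
        invCount (w * Equiv.swap i i' * Equiv.swap i' j) + 1) := by
    rw [cover_iff w i j hij', cover_iff (w * Equiv.swap i i') i' j hi'j, eC, eD]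
    constructor
    · rintro ⟨⟨hca, hP⟩, hcb⟩
      have hni' := hP i' hii' hi'j
      have hab : w i < w i' := by
        rcases lt_trichotomy (w i) (w i') with h | h | h
        · exact h
        · exact absurd (w.injective h) hii'.ne
        · exact absurd ⟨hcb, h⟩ hni'
      exact ⟨hab, hca, fun m hm1 hm2 hx => hP m (lt_trans hii' hm1) hm2
        (by rw [eM m hm1] at hx; exact hx)⟩
    · rintro ⟨hab, hca, hP⟩
      refine ⟨⟨hca, fun m hm1 hm2 hx => ?_⟩, lt_trans hca hab⟩
      by_cases hmi : m = i'
      · subst hmi; exact absurd hx.2 (asymm hab)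
      · have hm1' : i' < m := by
          rw [Fin.lt_def] at hm1 ⊢
          have : (m:ℕ) ≠ (i':ℕ) := fun hh => hmi (Fin.ext hh)
          omega
        exact hP m hm1' hm2 (by rw [eM m hm1']; exact hx)
  exact if_congr key rfl rfl

lemma part2 (n : ℕ) (i i' j : Fin n) (h1 : (i':ℕ) = (i:ℕ)+1) (hij : (i:ℕ)+1 < (j:ℕ))
    (w : Equiv.Perm (Fin n)) :
    uOp n i i' (dOp n i' j (Finsupp.single w 1)) =
      dOp n i j (uOp n i i' (Finsupp.single w 1)) := by
  have hii' : i < i' := by rw [Fin.lt_def]; omega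
  have hi'j : i' < j := by rw [Fin.lt_def]; omega
  have hij' : i < j := by rw [Fin.lt_def]; omega
  have eA : (w * Equiv.swap i' j) i = w i := by
    rw [Equiv.Perm.mul_apply, Equiv.swap_apply_of_ne_of_ne hii'.ne hij'.ne]
  have eB : (w * Equiv.swap i' j) i' = w j := by simp
  have eC : (w * Equiv.swap i i') i' = w i := by simp
  have eE : (w * Equiv.swap i i') i = w i' := by simp
  have eD : (w * Equiv.swap i i') j = w j := by
    rw [Equiv.Perm.mul_apply, Equiv.swap_apply_of_ne_of_ne hij'.ne' hi'j.ne']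
  have eM : ∀ m : Fin n, i' < m → (w * Equiv.swap i i') m = w m := fun m hm => by
    rw [Equiv.Perm.mul_apply,
      Equiv.swap_apply_of_ne_of_ne (lt_trans hii' hm).ne' hm.ne']
  have L : uOp n i i' (dOp n i' j (Finsupp.single w 1)) =
      if invCount w = invCount (w * Equiv.swap i' j) + 1 ∧ w i < w j then
        Finsupp.single (w * Equiv.swap i' j * Equiv.swap i i') (1:ℚ) else 0 := by
    rw [dOp_single]
    by_cases hC : invCount w = invCount (w * Equiv.swap i' j) + 1
    · rw [if_pos hC, uOp_single, eA, eB]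
      by_cases h2 : w i < w j
      · rw [if_pos h2, if_pos ⟨hC, h2⟩]
      · rw [if_neg h2, if_neg (fun hh => h2 hh.2)]
    · rw [if_neg hC, map_zero, if_neg (fun hh => hC hh.1)]
  have R : dOp n i j (uOp n i i' (Finsupp.single w 1)) =
      if w i < w i' ∧ invCount (w * Equiv.swap i i') =
          invCount (w * Equiv.swap i i' * Equiv.swap i j) + 1 then
        Finsupp.single (w * Equiv.swap i i' * Equiv.swap i j) (1:ℚ) else 0 := by
    rw [uOp_single]
    by_cases hC : w i < w i'
    · rw [if_pos hC, dOp_single]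
      by_cases h2 : invCount (w * Equiv.swap i i') =
          invCount (w * Equiv.swap i i' * Equiv.swap i j) + 1
      · rw [if_pos h2, if_pos ⟨hC, h2⟩]
      · rw [if_neg h2, if_neg (fun hh => h2 hh.2)]
    · rw [if_neg hC, map_zero, if_neg (fun hh => hC hh.1)]
  rw [L, R]
  have hperm : w * Equiv.swap i' j * Equiv.swap i i' =
      w * Equiv.swap i i' * Equiv.swap i j := by
    rw [mul_assoc, mul_assoc, swap_rel2 i i' j hii'.ne hij'.ne hi'j.ne]
  rw [hperm]
  have key : (invCount w = invCount (w * Equiv.swap i' j) + 1 ∧ w i < w j) ↔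
      (w i < w i' ∧ invCount (w * Equiv.swap i i') =
        invCount (w * Equiv.swap i i' * Equiv.swap i j) + 1) := by
    rw [cover_iff w i' j hi'j, cover_iff (w * Equiv.swap i i') i j hij', eE, eD]
    constructor
    · rintro ⟨⟨hcb, hQ⟩, hac⟩
      refine ⟨lt_trans hac hcb, hcb, fun m hm1 hm2 hx => ?_⟩
      by_cases hmi : m = i'
      · subst hmi; rw [eC] at hx; exact absurd hx.1 (asymm hac)
      · have hm1' : i' < m := by
          rw [Fin.lt_def] at hm1 ⊢
          have : (m:ℕ) ≠ (i':ℕ) := fun hh => hmi (Fin.ext hh)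
          omega
        exact hQ m hm1' hm2 (by rw [eM m hm1'] at hx; exact hx)
    · rintro ⟨hab, hcb, hR⟩
      have hni' := hR i' hii' hi'j
      rw [eC] at hni'
      have hac : w i < w j := by
        rcases lt_trichotomy (w i) (w j) with h | h | h
        · exact h
        · exact absurd (w.injective h) hij'.ne
        · exact absurd ⟨h, hab⟩ hni'
      exact ⟨⟨hcb, fun m hm1 hm2 hx => hR m (lt_trans hii' hm1) hm2
        (by rw [eM m hm1]; exact hx)⟩, hac⟩
  exact if_congr key rfl rfl

theorem stmt11 (n : ℕ) (i j : Fin n) (hij : (i : ℕ) + 1 < (j : ℕ))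
    (w : Equiv.Perm (Fin n)) :
    uOp n i ⟨(i : ℕ) + 1, Nat.lt_trans hij j.isLt⟩
        (dOp n i j (Finsupp.single w 1)) =
      dOp n ⟨(i : ℕ) + 1, Nat.lt_trans hij j.isLt⟩ j
        (uOp n i ⟨(i : ℕ) + 1, Nat.lt_trans hij j.isLt⟩ (Finsupp.single w 1)) ∧
    uOp n i ⟨(i : ℕ) + 1, Nat.lt_trans hij j.isLt⟩
        (dOp n ⟨(i : ℕ) + 1, Nat.lt_trans hij j.isLt⟩ j (Finsupp.single w 1)) =
      dOp n i j
        (uOp n i ⟨(i : ℕ) + 1, Nat.lt_trans hij j.isLt⟩ (Finsupp.single w 1)) :=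
  ⟨part1 n i ⟨(i : ℕ) + 1, Nat.lt_trans hij j.isLt⟩ j rfl hij w,
   part2 n i ⟨(i : ℕ) + 1, Nat.lt_trans hij j.isLt⟩ j rfl hij w⟩
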